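/- Let Δ₂ > 1 and let G be a temporal graph such that for every set S of at most 3 vertices, G[S] is a (1,Δ₂)-cluster temporal graph. Then G is a (1,Δ₂)-cluster temporal graph. -/

import Mathlib

/-- A time-edge: an (undirected) edge together with a time label. -/
abbrev TimeEdge := Sym2 ℕ × ℕ

/-- Vertices appearing in a set of time-edges. -/
def verts (S : Set TimeEdge) : Set ℕ := {v | ∃ te ∈ S, v ∈ te.1}

/-- Times appearing in a set of time-edges. -/
def times (S : Set TimeEdge) : Set ℕ := Prod.snd '' S

/-- The lifetime interval of a set of time-edges. -/
def lifetime (S : Set TimeEdge) : Set ℕ := Set.Icc (sInf (times S)) (sSup (times S))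

/-- Two sets of time-edges are Δ₂-independent if their vertex sets are disjoint or
their lifetime intervals are at temporal distance at least Δ₂. -/
def Indep (Δ₂ : ℕ) (S₁ S₂ : Set TimeEdge) : Prop :=
  Disjoint (verts S₁) (verts S₂) ∨
    ∀ s ∈ lifetime S₁, ∀ t ∈ lifetime S₂, Δ₂ ≤ max s t - min s t

/-- A set of time-edges is Δ₂-indivisible if it cannot be partitioned into two or more
nonempty pairwise Δ₂-independent subsets. -/
def Indivisible (Δ₂ : ℕ) (S : Set TimeEdge) : Prop :=
  ¬ ∃ P : Set (Set TimeEdge), P.Nontrivial ∧ (∀ A ∈ P, A.Nonempty) ∧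
      ⋃₀ P = S ∧ P.PairwiseDisjoint id ∧ P.Pairwise (Indep Δ₂)

/-- The edge `e` is Δ₁-dense in `[a,b]` with respect to the time-edge set `S`. -/
def DenseIn (S : Set TimeEdge) (Δ₁ : ℕ) (e : Sym2 ℕ) (a b : ℕ) : Prop :=
  ∀ τ ∈ Set.Icc a (max a (b + 1 - Δ₁)), ∃ t, t ∈ Set.Icc τ (τ + Δ₁ - 1) ∧ (e, t) ∈ S

/-- A set of time-edges forms a Δ₁-temporal clique if every pair of its vertices is
joined by an edge Δ₁-dense in its lifetime. -/
def IsTemporalClique (Δ₁ : ℕ) (K : Set TimeEdge) : Prop :=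
  ∀ x ∈ verts K, ∀ y ∈ verts K, x ≠ y →
    DenseIn K Δ₁ s(x, y) (sInf (times K)) (sSup (times K))

/-- A (Δ₁,Δ₂)-cluster temporal graph: the time-edges partition into pairwise
Δ₂-independent Δ₁-temporal cliques. -/
def IsClusterTemporalGraph (Δ₁ Δ₂ : ℕ) (E : Set TimeEdge) : Prop :=
  ∃ P : Set (Set TimeEdge), ⋃₀ P = E ∧ P.PairwiseDisjoint id ∧
    (∀ K ∈ P, IsTemporalClique Δ₁ K) ∧ P.Pairwise (Indep Δ₂)

/-- A Δ₂-saturated set of time-edges in `E`: a Δ₂-indivisible subset of `E` such that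
adding any other time-edge of `E` destroys indivisibility. -/
def Saturated (Δ₂ : ℕ) (E S : Set TimeEdge) : Prop :=
  S ⊆ E ∧ Indivisible Δ₂ S ∧ ∀ te ∈ E, te ∉ S → ¬ Indivisible Δ₂ (insert te S)

/-- The induced temporal subgraph on a vertex set `A`. -/
def induced (E : Set TimeEdge) (A : Set ℕ) : Set TimeEdge :=
  {te ∈ E | ∀ v ∈ te.1, v ∈ A}

/-- Two single time-edges are Δ-independent. -/
def TEIndep (Δ : ℕ) (te₁ te₂ : TimeEdge) : Prop :=
  (∀ v ∈ te₁.1, v ∉ te₂.1) ∨ Δ ≤ max te₁.2 te₂.2 - min te₁.2 te₂.2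

-- my auxiliary defs
def stp (d : ℕ) (E : Set TimeEdge) (a b : TimeEdge) : Prop :=
  a ∈ E ∧ b ∈ E ∧ (∃ v, v ∈ a.1 ∧ v ∈ b.1) ∧ max a.2 b.2 - min a.2 b.2 < d

def Rch (d : ℕ) (E : Set TimeEdge) : TimeEdge → TimeEdge → Prop :=
  Relation.ReflTransGen (stp d E)

def comp (d : ℕ) (E : Set TimeEdge) (t0 : TimeEdge) : Set TimeEdge :=
  {x | x ∈ E ∧ Rch d E t0 x}

def TriP (d : ℕ) (E : Set TimeEdge) : Prop :=
  ∀ a b : TimeEdge, a ∈ E → b ∈ E → (∃ v, v ∈ a.1 ∧ v ∈ b.1) →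
    max a.2 b.2 - min a.2 b.2 < d →
    ∀ x y : ℕ, (x ∈ a.1 ∨ x ∈ b.1) → (y ∈ a.1 ∨ y ∈ b.1) → x ≠ y →
    ∀ τ, min a.2 b.2 ≤ τ → τ ≤ max a.2 b.2 → (s(x,y), τ) ∈ E

lemma sym2_eq_of_mem {x y : ℕ} {e : Sym2 ℕ} (hx : x ∈ e) (hy : y ∈ e) (h : x ≠ y) :
    e = s(x,y) := by
  induction e using Sym2.ind with
  | _ a b => rw [Sym2.mem_iff] at hx hy; rcases hx with rfl|rfl <;> rcases hy with rfl|rfl <;>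
      first | exact absurd rfl h | rfl | exact Sym2.eq_swap

lemma stp_symm {d E} {a b : TimeEdge} (h : stp d E a b) : stp d E b a := by
  obtain ⟨h1, h2, ⟨v, hv1, hv2⟩, h4⟩ := h
  exact ⟨h2, h1, ⟨v, hv2, hv1⟩, by omega⟩

lemma rch_symm {d E} {a b : TimeEdge} (h : Rch d E a b) : Rch d E b a :=
  haveI : Std.Symm (stp d E) := ⟨fun _ _ => stp_symm⟩
  (Relation.ReflTransGen.symmetric (r := stp d E)).symm _ _ h

lemma tri {d : ℕ} {E : Set TimeEdge} (hE : E.Finite)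
    (h3 : ∀ A : Set ℕ, A.Finite → A.ncard ≤ 3 → IsClusterTemporalGraph 1 d (induced E A)) :
    TriP d E := by
  intro a b haE hbE ⟨v, hva, hvb⟩ hgap x y hx hy hxy τ h1 h2
  obtain ⟨w₁, hw₁⟩ := Sym2.mem_iff_exists.mp hva
  obtain ⟨w₂, hw₂⟩ := Sym2.mem_iff_exists.mp hvb
  set A : Set ℕ := {v, w₁, w₂} with hA
  have hAfin : A.Finite := (Set.finite_singleton _).insert _ |>.insert _
  have hAcard : A.ncard ≤ 3 := by
    calc A.ncard ≤ ({w₁, w₂} : Set ℕ).ncard + 1 := Set.ncard_insert_le _ _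
    _ ≤ (({w₂} : Set ℕ).ncard + 1) + 1 := by
        have := Set.ncard_insert_le w₁ ({w₂} : Set ℕ); omega
    _ ≤ 3 := by rw [Set.ncard_singleton]
  obtain ⟨P, hUn, _hdis, hclq, hind⟩ := h3 A hAfin hAcard
  have haI : a ∈ induced E A := by
    refine ⟨haE, ?_⟩
    intro u hu; rw [hw₁, Sym2.mem_iff] at hu
    rcases hu with rfl|rfl <;> simp [hA]
  have hbI : b ∈ induced E A := by
    refine ⟨hbE, ?_⟩
    intro u hu; rw [hw₂, Sym2.mem_iff] at hu
    rcases hu with rfl|rfl <;> simp [hA]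
  rw [← hUn] at haI hbI
  obtain ⟨Ka, hKaP, haK⟩ := haI
  obtain ⟨Kb, hKbP, hbK⟩ := hbI
  have hKsub : ∀ K ∈ P, K ⊆ E := by
    intro K hKP z hz
    have : z ∈ ⋃₀ P := ⟨K, hKP, hz⟩
    rw [hUn] at this; exact this.1
  have hbdd : ∀ K ∈ P, BddAbove (times K) :=
    fun K hKP => ((hE.image Prod.snd).subset (Set.image_mono (hKsub K hKP))).bddAbove
  have hKK : Ka = Kb := by
    by_contra hne
    rcases hind hKaP hKbP hne with hdisj | hfar
    · exact Set.disjoint_left.mp hdisj ⟨a, haK, hva⟩ ⟨b, hbK, hvb⟩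
    · have hat : a.2 ∈ times Ka := ⟨a, haK, rfl⟩
      have hbt : b.2 ∈ times Kb := ⟨b, hbK, rfl⟩
      have h := hfar a.2 ⟨Nat.sInf_le hat, le_csSup (hbdd Ka hKaP) hat⟩
        b.2 ⟨Nat.sInf_le hbt, le_csSup (hbdd Kb hKbP) hbt⟩
      omega
  subst hKK
  have hxK : x ∈ verts Ka := by rcases hx with hx|hx; exacts [⟨a, haK, hx⟩, ⟨b, hbK, hx⟩]
  have hyK : y ∈ verts Ka := by rcases hy with hy|hy; exacts [⟨a, haK, hy⟩, ⟨b, hbK, hy⟩]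
  have hta : a.2 ∈ times Ka := ⟨a, haK, rfl⟩
  have htb : b.2 ∈ times Ka := ⟨b, hbK, rfl⟩
  have hia : sInf (times Ka) ≤ a.2 := Nat.sInf_le hta
  have hib : sInf (times Ka) ≤ b.2 := Nat.sInf_le htb
  have hsa : a.2 ≤ sSup (times Ka) := le_csSup (hbdd Ka hKaP) hta
  have hsb : b.2 ≤ sSup (times Ka) := le_csSup (hbdd Ka hKaP) htb
  have hdense := hclq Ka hKaP x hxK y hyK hxy τ ⟨by omega, by omega⟩
  obtain ⟨t, ⟨ht1, ht2⟩, htK⟩ := hdense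
  have : t = τ := by omega
  subst this
  exact hKsub Ka hKaP htK

lemma walk {d : ℕ} {E : Set TimeEdge} (hd : 2 ≤ d) (htri : TriP d E) {p w : ℕ} (hpw : p ≠ w)
    {A B : ℕ} (hanch : ∀ σ, A ≤ σ → σ ≤ B → (s(p,w),σ) ∈ E)
    {x : ℕ} (hxw : x ≠ w) {c₀ : ℕ} (hc₁ : A ≤ c₀) (hc₂ : c₀ ≤ B)
    (hpend : (s(x,w),c₀) ∈ E) :
    ∀ τ, A ≤ τ → τ ≤ B → (s(x,w),τ) ∈ E := by
  by_cases hxp : x = p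
  · subst hxp; exact hanch
  · have up : ∀ k, c₀ + k ≤ B → (s(x,w), c₀ + k) ∈ E := by
      intro k
      induction k with
      | zero => intro _; exact hpend
      | succ k ih =>
        intro hk
        have prev := ih (by omega)
        have anch := hanch (c₀ + k + 1) (by omega) (by omega)
        have := htri (s(x,w), c₀ + k) (s(p,w), c₀ + k + 1) prev anch
          ⟨w, Sym2.mem_mk_right _ _, Sym2.mem_mk_right _ _⟩ (by simp; omega)
          x w (Or.inl (Sym2.mem_mk_left _ _)) (Or.inr (Sym2.mem_mk_right _ _)) hxw
          (c₀ + k + 1) (by simp) (by simp)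
        rw [← Nat.add_assoc]; simpa using this
    have down : ∀ k, A + k ≤ c₀ → (s(x,w), c₀ - k) ∈ E := by
      intro k
      induction k with
      | zero => intro _; simpa using hpend
      | succ k ih =>
        intro hk
        have prev := ih (by omega)
        have anch := hanch (c₀ - (k+1)) (by omega) (by omega)
        have := htri (s(x,w), c₀ - k) (s(p,w), c₀ - (k+1)) prev anch
          ⟨w, Sym2.mem_mk_right _ _, Sym2.mem_mk_right _ _⟩ (by simp; omega)
          x w (Or.inl (Sym2.mem_mk_left _ _)) (Or.inr (Sym2.mem_mk_right _ _)) hxw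
          (c₀ - (k+1)) (by omega) (by omega)
        simpa using this
    intro τ h1 h2
    rcases le_total c₀ τ with h | h
    · have := up (τ - c₀) (by omega); rwa [show c₀ + (τ - c₀) = τ by omega] at this
    · have := down (c₀ - τ) (by omega); rwa [show c₀ - (c₀ - τ) = τ by omega] at this

lemma reachin {d : ℕ} {E : Set TimeEdge} (hd : 2 ≤ d) {g : Sym2 ℕ} {A B : ℕ}
    (hall : ∀ ρ, A ≤ ρ → ρ ≤ B → (g, ρ) ∈ E) :
    ∀ c₀ τ, A ≤ c₀ → c₀ ≤ B → A ≤ τ → τ ≤ B → Rch d E (g, c₀) (g, τ) := by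
  have hstep : ∀ ρ ρ', A ≤ ρ → ρ ≤ B → A ≤ ρ' → ρ' ≤ B → (ρ' = ρ + 1 ∨ ρ = ρ' + 1 ∨ ρ = ρ') →
      stp d E (g, ρ) (g, ρ') := by
    intro ρ ρ' h1 h2 h3 h4 h5
    exact ⟨hall ρ h1 h2, hall ρ' h3 h4, ⟨g.out.1, Sym2.out_fst_mem g, Sym2.out_fst_mem g⟩,
      by simp; omega⟩
  intro c₀ τ h1 h2 h3 h4
  have up : ∀ k, c₀ + k ≤ B → Rch d E (g, c₀) (g, c₀ + k) := by
    intro k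
    induction k with
    | zero => intro _; exact Relation.ReflTransGen.refl
    | succ k ih =>
      intro hk
      exact (ih (by omega)).tail (hstep _ _ (by omega) (by omega) (by omega) (by omega) (by omega))
  have down : ∀ k, A + k ≤ c₀ → Rch d E (g, c₀) (g, c₀ - k) := by
    intro k
    induction k with
    | zero => intro _; exact Relation.ReflTransGen.refl
    | succ k ih =>
      intro hk
      exact (ih (by omega)).tail (hstep _ _ (by omega) (by omega) (by omega) (by omega) (by omega))
  rcases le_total c₀ τ with h | h
  · have := up (τ - c₀) (by omega); rwa [show c₀ + (τ - c₀) = τ by omega] at this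
  · have := down (c₀ - τ) (by omega); rwa [show c₀ - (c₀ - τ) = τ by omega] at this

lemma main {d : ℕ} {E : Set TimeEdge} (hd : 2 ≤ d) (htri : TriP d E) :
    ∀ a b : TimeEdge, a ∈ E → Rch d E a b →
    (∀ x y : ℕ, (x ∈ a.1 ∨ x ∈ b.1) → (y ∈ a.1 ∨ y ∈ b.1) → x ≠ y →
      ∀ τ, min a.2 b.2 ≤ τ → τ ≤ max a.2 b.2 → (s(x,y), τ) ∈ E)
    ∧
    (∀ w, (w ∈ a.1 ∨ w ∈ b.1) → ∀ x, x ≠ w →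
      ∀ c₀, min a.2 b.2 ≤ c₀ → c₀ ≤ max a.2 b.2 → (s(x,w), c₀) ∈ E →
      ∀ τ, min a.2 b.2 ≤ τ → τ ≤ max a.2 b.2 → (s(x,w), τ) ∈ E) := by
  intro a b ha h
  induction h with
  | refl =>
    constructor
    · intro x y hx hy hxy τ h1 h2
      have hτ : τ = a.2 := by omega
      have hx' : x ∈ a.1 := by tauto
      have hy' : y ∈ a.1 := by tauto
      have he : a.1 = s(x,y) := sym2_eq_of_mem hx' hy' hxy
      subst hτ; rw [← he]; exact ha
    · intro w hw x hxw c₀ h1 h2 hp τ h3 h4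
      have : τ = c₀ := by omega
      subst this; exact hp
  | @tail b c hab hbc ih =>
    obtain ⟨hbE, hcE, ⟨v, hvb, hvc⟩, hgap⟩ := hbc
    obtain ⟨I1, S1⟩ := ih
    have P' := htri b c hbE hcE ⟨v, hvb, hvc⟩ hgap
    -- Lv : spreading a pendant edge at v over the hull of (b.2, c.2)
    have Lv : ∀ x, x ≠ v → ∀ c₀, min b.2 c.2 ≤ c₀ → c₀ ≤ max b.2 c.2 → (s(x,v), c₀) ∈ E →
        ∀ τ, min b.2 c.2 ≤ τ → τ ≤ max b.2 c.2 → (s(x,v), τ) ∈ E := by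
      intro x hx c₀ h1 h2 hp τ h3 h4
      have T1 : ∀ ρ, min c₀ b.2 ≤ ρ → ρ ≤ max c₀ b.2 → (s(x,v), ρ) ∈ E := by
        intro ρ hρ1 hρ2
        exact htri (s(x,v), c₀) b hp hbE ⟨v, Sym2.mem_mk_right _ _, hvb⟩ (by omega)
          x v (Or.inl (Sym2.mem_mk_left _ _)) (Or.inr hvb) hx ρ (by omega) (by omega)
      have T2 : ∀ ρ, min c₀ c.2 ≤ ρ → ρ ≤ max c₀ c.2 → (s(x,v), ρ) ∈ E := by
        intro ρ hρ1 hρ2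
        exact htri (s(x,v), c₀) c hp hcE ⟨v, Sym2.mem_mk_right _ _, hvc⟩ (by omega)
          x v (Or.inl (Sym2.mem_mk_left _ _)) (Or.inr hvc) hx ρ (by omega) (by omega)
      rcases (by omega : (min c₀ b.2 ≤ τ ∧ τ ≤ max c₀ b.2) ∨ (min c₀ c.2 ≤ τ ∧ τ ≤ max c₀ c.2))
        with ⟨hh1, hh2⟩ | ⟨hh1, hh2⟩
      · exact T1 τ hh1 hh2
      · exact T2 τ hh1 hh2
    -- Xv : spreading a pendant edge at v over the whole hull [A,B]
    have Xv : ∀ x, x ≠ v → ∀ c₀,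
        min a.2 (min b.2 c.2) ≤ c₀ → c₀ ≤ max a.2 (max b.2 c.2) → (s(x,v), c₀) ∈ E →
        ∀ τ, min a.2 (min b.2 c.2) ≤ τ → τ ≤ max a.2 (max b.2 c.2) → (s(x,v), τ) ∈ E := by
      intro x hx c₀ h1 h2 hp
      have hb2 : (s(x,v), b.2) ∈ E := by
        rcases (by omega : (min a.2 b.2 ≤ c₀ ∧ c₀ ≤ max a.2 b.2) ∨
            (min b.2 c.2 ≤ c₀ ∧ c₀ ≤ max b.2 c.2)) with ⟨hh1, hh2⟩ | ⟨hh1, hh2⟩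
        · exact S1 v (Or.inr hvb) x hx c₀ hh1 hh2 hp b.2 (by omega) (by omega)
        · exact Lv x hx c₀ hh1 hh2 hp b.2 (by omega) (by omega)
      intro τ h3 h4
      rcases (by omega : (min a.2 b.2 ≤ τ ∧ τ ≤ max a.2 b.2) ∨
          (min b.2 c.2 ≤ τ ∧ τ ≤ max b.2 c.2)) with ⟨hh1, hh2⟩ | ⟨hh1, hh2⟩
      · exact S1 v (Or.inr hvb) x hx b.2 (by omega) (by omega) hb2 τ hh1 hh2
      · exact Lv x hx b.2 (by omega) (by omega) hb2 τ hh1 hh2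
    -- anch : every vertex w of a,b,c is joined to v throughout [A,B]
    have anch : ∀ w, (w ∈ a.1 ∨ w ∈ b.1 ∨ w ∈ c.1) → w ≠ v →
        ∀ τ, min a.2 (min b.2 c.2) ≤ τ → τ ≤ max a.2 (max b.2 c.2) → (s(w,v), τ) ∈ E := by
      intro w hw hwv τ h1 h2
      have base : (s(w,v), b.2) ∈ E := by
        rcases hw with hw | hw | hw
        · exact I1 w v (Or.inl hw) (Or.inr hvb) hwv b.2 (by omega) (by omega)
        · exact I1 w v (Or.inr hw) (Or.inr hvb) hwv b.2 (by omega) (by omega)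
        · exact P' w v (Or.inr hw) (Or.inl hvb) hwv b.2 (by omega) (by omega)
      exact Xv w hwv b.2 (by omega) (by omega) base τ h1 h2
    -- X : master spreading over [A,B] at any vertex of a,b,c
    have X : ∀ w, (w ∈ a.1 ∨ w ∈ b.1 ∨ w ∈ c.1) → ∀ x, x ≠ w →
        ∀ c₀, min a.2 (min b.2 c.2) ≤ c₀ → c₀ ≤ max a.2 (max b.2 c.2) → (s(x,w), c₀) ∈ E →
        ∀ τ, min a.2 (min b.2 c.2) ≤ τ → τ ≤ max a.2 (max b.2 c.2) → (s(x,w), τ) ∈ E := by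
      intro w hw x hxw c₀ h1 h2 hp τ h3 h4
      by_cases hwv : w = v
      · subst hwv; exact Xv x hxw c₀ h1 h2 hp τ h3 h4
      · by_cases hxv : x = v
        · subst hxv
          rw [Sym2.eq_swap]
          exact anch w hw hwv τ h3 h4
        · refine walk hd htri (show v ≠ w from fun h => hwv h.symm)
            (fun σ hσ1 hσ2 => by rw [Sym2.eq_swap]; exact anch w hw hwv σ hσ1 hσ2)
            hxw h1 h2 hp τ h3 h4
    -- pairs : full clique among all vertices of a,b,c over [A,B]
    have pairs : ∀ x y : ℕ, (x ∈ a.1 ∨ x ∈ b.1 ∨ x ∈ c.1) → (y ∈ a.1 ∨ y ∈ b.1 ∨ y ∈ c.1) →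
        x ≠ y → ∀ τ, min a.2 (min b.2 c.2) ≤ τ → τ ≤ max a.2 (max b.2 c.2) →
        (s(x,y), τ) ∈ E := by
      intro x y hx hy hxy τ h1 h2
      by_cases hxv : x = v
      · subst hxv
        rw [Sym2.eq_swap]
        exact anch y hy (fun h => hxy h.symm) τ h1 h2
      · by_cases hyv : y = v
        · subst hyv
          exact anch x hx hxv τ h1 h2
        · have hx' := anch x hx hxv b.2 (by omega) (by omega)
          have hy' := anch y hy hyv b.2 (by omega) (by omega)
          have base : (s(x,y), b.2) ∈ E := by
            exact htri (s(x,v), b.2) (s(y,v), b.2) hx' hy'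
              ⟨v, Sym2.mem_mk_right _ _, Sym2.mem_mk_right _ _⟩ (by omega)
              x y (Or.inl (Sym2.mem_mk_left _ _)) (Or.inr (Sym2.mem_mk_left _ _)) hxy
              b.2 (by omega) (by omega)
          exact X y (by tauto) x hxy b.2 (by omega) (by omega) base τ h1 h2
    constructor
    · intro x y hx hy hxy τ h1 h2
      exact pairs x y (by tauto) (by tauto) hxy τ (by omega) (by omega)
    · intro w hw x hxw c₀ h1 h2 hp τ h3 h4
      exact X w (by tauto) x hxw c₀ (by omega) (by omega) hp τ (by omega) (by omega)

lemma comp_eq {d : ℕ} {E : Set TimeEdge} {t1 t2 x : TimeEdge}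
    (h1 : Rch d E t1 x) (h2 : Rch d E t2 x) : comp d E t1 = comp d E t2 := by
  ext y
  constructor
  · intro ⟨hyE, hy⟩; exact ⟨hyE, (h2.trans (rch_symm h1)).trans hy⟩
  · intro ⟨hyE, hy⟩; exact ⟨hyE, (h1.trans (rch_symm h2)).trans hy⟩

lemma clqcomp {d : ℕ} {E : Set TimeEdge} (hd : 2 ≤ d) (hE : E.Finite) (htri : TriP d E)
    {t0 : TimeEdge} (h0 : t0 ∈ E) :
    ∀ x y, x ∈ verts (comp d E t0) → y ∈ verts (comp d E t0) → x ≠ y →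
    ∀ τ, sInf (times (comp d E t0)) ≤ τ → τ ≤ sSup (times (comp d E t0)) →
    (s(x,y), τ) ∈ comp d E t0 := by
  set C := comp d E t0 with hC
  have hCE : C ⊆ E := fun z hz => hz.1
  have hCfin : (times C).Finite := (hE.subset hCE).image _
  have ht0C : t0 ∈ C := ⟨h0, .refl⟩
  have hTne : (times C).Nonempty := ⟨t0.2, t0, ht0C, rfl⟩
  intro x y hx hy hxy τ h1 h2
  obtain ⟨tx, htxC, hxtx⟩ := hx
  obtain ⟨ty, htyC, hyty⟩ := hy
  obtain ⟨ta, htaC, hta2⟩ := Nat.sInf_mem hTne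
  obtain ⟨tb, htbC, htb2⟩ := hTne.csSup_mem hCfin
  have hbb : ∀ z ∈ C, sInf (times C) ≤ z.2 ∧ z.2 ≤ sSup (times C) := fun z hz =>
    ⟨Nat.sInf_le ⟨z, hz, rfl⟩, le_csSup hCfin.bddAbove ⟨z, hz, rfl⟩⟩
  have hrch : ∀ z ∈ C, ∀ z' ∈ C, Rch d E z z' := fun z hz z' hz' => (rch_symm hz.2).trans hz'.2
  have hg : (s(x,y), tx.2) ∈ E :=
    (main hd htri tx ty (hCE htxC) (hrch tx htxC ty htyC)).1 x y (Or.inl hxtx) (Or.inr hyty)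
      hxy tx.2 (by omega) (by omega)
  set g : TimeEdge := (s(x,y), tx.2) with hgdef
  have hg2 : g.2 = tx.2 := rfl
  have hgC : g ∈ C :=
    ⟨hg, htxC.2.tail ⟨hCE htxC, hg, ⟨x, hxtx, Sym2.mem_mk_left _ _⟩, by omega⟩⟩
  have low := (main hd htri g ta hg (hrch g hgC ta htaC)).1 x y
    (Or.inl (Sym2.mem_mk_left _ _)) (Or.inl (Sym2.mem_mk_right _ _)) hxy
  have high := (main hd htri g tb hg (hrch g hgC tb htbC)).1 x y
    (Or.inl (Sym2.mem_mk_left _ _)) (Or.inl (Sym2.mem_mk_right _ _)) hxy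
  have hbtx := hbb tx htxC
  have hall : ∀ ρ, sInf (times C) ≤ ρ → ρ ≤ sSup (times C) → (s(x,y), ρ) ∈ E := by
    intro ρ hρ1 hρ2
    rcases le_total ρ tx.2 with h | h
    · exact low ρ (by omega) (by omega)
    · exact high ρ (by omega) (by omega)
  have hreach : Rch d E g (s(x,y), τ) :=
    reachin hd hall tx.2 τ (by omega) (by omega) h1 h2
  exact ⟨hall τ h1 h2, hgC.2.trans hreach⟩

lemma sandwich {d : ℕ} {E : Set TimeEdge} (hd : 2 ≤ d) (hE : E.Finite)
    {t0 : TimeEdge} (h0 : t0 ∈ E) :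
    ∀ τ, sInf (times (comp d E t0)) ≤ τ → τ ≤ sSup (times (comp d E t0)) →
    ∃ ρ₁ ρ₂, ρ₁ ∈ times (comp d E t0) ∧ ρ₂ ∈ times (comp d E t0) ∧
      ρ₁ ≤ τ ∧ τ ≤ ρ₂ ∧ ρ₂ - ρ₁ < d := by
  set C := comp d E t0 with hC
  have hCE : C ⊆ E := fun z hz => hz.1
  have hCfin : (times C).Finite := (hE.subset hCE).image _
  have ht0C : t0 ∈ C := ⟨h0, .refl⟩
  have hTne : (times C).Nonempty := ⟨t0.2, t0, ht0C, rfl⟩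
  intro τ h1 h2
  set T1 : Set ℕ := {ρ ∈ times C | ρ ≤ τ} with hT1
  set T2 : Set ℕ := {ρ ∈ times C | τ ≤ ρ} with hT2
  have hT1ne : T1.Nonempty := ⟨sInf (times C), Nat.sInf_mem hTne, h1⟩
  have hT2ne : T2.Nonempty := ⟨sSup (times C), hTne.csSup_mem hCfin, h2⟩
  have hT1fin : T1.Finite := hCfin.subset (Set.sep_subset _ _)
  obtain ⟨hρ₁T, hρ₁le⟩ := hT1ne.csSup_mem hT1fin
  obtain ⟨hρ₂T, hρ₂le⟩ := Nat.sInf_mem hT2ne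
  refine ⟨sSup T1, sInf T2, hρ₁T, hρ₂T, hρ₁le, hρ₂le, ?_⟩
  by_contra hbad
  push_neg at hbad
  have hdich : ∀ ρ ∈ times C, ρ ≤ sSup T1 ∨ sInf T2 ≤ ρ := by
    intro ρ hρ
    rcases le_total ρ τ with h | h
    · exact Or.inl (le_csSup hT1fin.bddAbove ⟨hρ, h⟩)
    · exact Or.inr (Nat.sInf_le ⟨hρ, h⟩)
  obtain ⟨g₁, hg₁C, hg₁2⟩ := hρ₁T
  obtain ⟨g₂, hg₂C, hg₂2⟩ := hρ₂T
  have claim : ∀ y, Rch d E g₁ y → y.2 ≤ sSup T1 := by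
    intro y hy
    induction hy with
    | refl => omega
    | @tail m y hm hstep ihm =>
      have hyC : y ∈ C := ⟨hstep.2.1, hg₁C.2.trans (hm.tail hstep)⟩
      have hdy := hdich y.2 ⟨y, hyC, rfl⟩
      obtain ⟨_, _, _, hgap⟩ := hstep
      rcases hdy with h | h
      · exact h
      · omega
  have h21 := claim g₂ ((rch_symm hg₁C.2).trans hg₂C.2)
  omega


theorem three_vertex_condition_suffices (Δ₂ : ℕ) (h2 : 1 < Δ₂)
    (E : Set TimeEdge) (hE : E.Finite)
    (h3 : ∀ A : Set ℕ, A.Finite → A.ncard ≤ 3 →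
      IsClusterTemporalGraph 1 Δ₂ (induced E A)) :
    IsClusterTemporalGraph 1 Δ₂ E := by
  have hd : 2 ≤ Δ₂ := h2
  have htri : TriP Δ₂ E := tri hE h3
  refine ⟨{S | ∃ t0 ∈ E, S = comp Δ₂ E t0}, ?_, ?_, ?_, ?_⟩
  · apply Set.eq_of_subset_of_subset
    · rintro x ⟨S, ⟨t0, ht0, rfl⟩, hx⟩; exact hx.1
    · intro te hte; exact ⟨comp Δ₂ E te, ⟨te, hte, rfl⟩, hte, .refl⟩
  · rintro S₁ ⟨t1, ht1, rfl⟩ S₂ ⟨t2, ht2, rfl⟩ hne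
    simp only [Function.onFun, id_eq]
    by_contra hdis
    rw [Set.not_disjoint_iff] at hdis
    obtain ⟨x, hx1, hx2⟩ := hdis
    exact hne (comp_eq hx1.2 hx2.2)
  · rintro K ⟨t0, ht0, rfl⟩
    intro x hx y hy hxy
    set C := comp Δ₂ E t0 with hC
    have hCE : C ⊆ E := fun z hz => hz.1
    have hCfin : (times C).Finite := (hE.subset hCE).image _
    have ht0C : t0 ∈ C := ⟨ht0, .refl⟩
    have hIS : sInf (times C) ≤ sSup (times C) :=
      le_trans (Nat.sInf_le ⟨t0, ht0C, rfl⟩) (le_csSup hCfin.bddAbove ⟨t0, ht0C, rfl⟩)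
    intro τ hτ
    rw [Set.mem_Icc] at hτ
    obtain ⟨hτ1, hτ2⟩ := hτ
    rw [Nat.add_sub_cancel] at hτ2
    have hτ3 : τ ≤ sSup (times C) := by
      rcases max_cases (sInf (times C)) (sSup (times C)) with ⟨h, _⟩ | ⟨h, _⟩ <;> omega
    refine ⟨τ, Set.mem_Icc.mpr ⟨le_refl _, by omega⟩,
      clqcomp hd hE htri ht0 x y hx hy hxy τ hτ1 (hC ▸ hτ3)⟩
  · rintro S₁ ⟨t1, ht1, rfl⟩ S₂ ⟨t2, ht2, rfl⟩ hne
    by_cases hdisj : Disjoint (verts (comp Δ₂ E t1)) (verts (comp Δ₂ E t2))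
    · exact Or.inl hdisj
    right
    rw [Set.not_disjoint_iff] at hdisj
    obtain ⟨v, hv1, hv2⟩ := hdisj
    have cross : ∀ g₁ ∈ comp Δ₂ E t1, ∀ g₂ ∈ comp Δ₂ E t2, v ∈ g₁.1 → v ∈ g₂.1 →
        Δ₂ ≤ max g₁.2 g₂.2 - min g₁.2 g₂.2 := by
      intro g₁ hg₁ g₂ hg₂ hv₁ hv₂
      by_contra hlt
      push_neg at hlt
      have hstep : stp Δ₂ E g₁ g₂ := ⟨hg₁.1, hg₂.1, ⟨v, hv₁, hv₂⟩, hlt⟩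
      exact hne (comp_eq (hg₁.2.tail hstep) hg₂.2)
    have sand : ∀ t0 : TimeEdge, t0 ∈ E → v ∈ verts (comp Δ₂ E t0) →
        ∀ s, sInf (times (comp Δ₂ E t0)) ≤ s → s ≤ sSup (times (comp Δ₂ E t0)) →
        ∃ g₁ g₂ : TimeEdge, g₁ ∈ comp Δ₂ E t0 ∧ g₂ ∈ comp Δ₂ E t0 ∧ v ∈ g₁.1 ∧ v ∈ g₂.1 ∧
          g₁.2 ≤ s ∧ s ≤ g₂.2 ∧ g₂.2 - g₁.2 < Δ₂ := by
      intro t0 ht0 hv s hs1 hs2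
      by_cases hy : ∃ y ∈ verts (comp Δ₂ E t0), y ≠ v
      · obtain ⟨y, hyv, hyne⟩ := hy
        have hm := clqcomp hd hE htri ht0 v y hv hyv (fun h => hyne h.symm) s hs1 hs2
        exact ⟨(s(v,y), s), (s(v,y), s), hm, hm, Sym2.mem_mk_left _ _, Sym2.mem_mk_left _ _,
          le_refl s, le_refl s, by omega⟩
      · push_neg at hy
        obtain ⟨ρ₁, ρ₂, hρ₁, hρ₂, hl1, hl2, hlt⟩ := sandwich hd hE ht0 s hs1 hs2
        obtain ⟨g₁, hg₁, hg₁2⟩ := hρ₁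
        obtain ⟨g₂, hg₂, hg₂2⟩ := hρ₂
        have hvg : ∀ g ∈ comp Δ₂ E t0, v ∈ g.1 := by
          intro g hg
          have hm : g.1.out.1 ∈ g.1 := Sym2.out_fst_mem _
          have heq : g.1.out.1 = v := hy _ ⟨g, hg, hm⟩
          rwa [heq] at hm
        exact ⟨g₁, g₂, hg₁, hg₂, hvg g₁ hg₁, hvg g₂ hg₂, by omega, by omega, by omega⟩
    intro s hs t ht
    simp only [lifetime, Set.mem_Icc] at hs ht
    obtain ⟨g₁, g₂, hg₁, hg₂, hv₁, hv₂, ha1, ha2, ha3⟩ := sand t1 ht1 hv1 s hs.1 hs.2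
    obtain ⟨f₁, f₂, hf₁, hf₂, hw₁, hw₂, hb1, hb2, hb3⟩ := sand t2 ht2 hv2 t ht.1 ht.2
    have c11 := cross g₁ hg₁ f₁ hf₁ hv₁ hw₁
    have c12 := cross g₁ hg₁ f₂ hf₂ hv₁ hw₂
    have c21 := cross g₂ hg₂ f₁ hf₁ hv₂ hw₁
    have c22 := cross g₂ hg₂ f₂ hf₂ hv₂ hw₂
    omega
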